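/- Let p be an odd prime and x a rational p-integer. Then \sum_{k=0}^{p-1} \binom{2k}{k}^2 / 16^k \cdot (x^k - (-1)^{(p-1)/2} (1-x)^k) \equiv 0 \pmod{p^2}. -/

import Mathlib

open Finset

/-- `a ≡ b (mod p^k)` as rationals: `a - b` is `p^k` times a `p`-integral rational. -/
def ratCongr (p k : ℕ) (a b : ℚ) : Prop :=
  ∃ c : ℚ, a - b = (p : ℚ) ^ k * c ∧ ¬ (p ∣ c.den)

section Aux
open Nat
variable {R : Type*} [CommRing R]


variable {R : Type*} [CommRing R]

/-- triangle sum reindex -/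
lemma tri_sum (N : ℕ) (f : ℕ → ℕ → R) :
    ∑ k ∈ range N, ∑ i ∈ range (N - k), f k i
      = ∑ m ∈ range N, ∑ k ∈ range (m + 1), f k (m - k) := by
  induction N with
  | zero => simp
  | succ N ih =>
    rw [sum_range_succ, sum_range_succ]
    have h1 : ∀ k ∈ range N, ∑ i ∈ range (N + 1 - k), f k i
        = (∑ i ∈ range (N - k), f k i) + f k (N - k) := by
      intro k hk
      rw [mem_range] at hk
      rw [show N + 1 - k = (N - k) + 1 by omega, sum_range_succ]
    rw [sum_congr rfl h1, sum_add_distrib, ih]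
    simp [sum_range_succ]
    ring

lemma vandermonde_sum (n m : ℕ) :
    ∑ k ∈ range (m + 1), n.choose k * m.choose k = (n + m).choose m := by
  rw [Nat.add_choose_eq, Finset.Nat.sum_antidiagonal_eq_sum_range_succ_mk]
  refine sum_congr rfl fun k hk => ?_
  rw [mem_range] at hk
  rw [Nat.choose_symm (by omega)]

/-- Expansion of the shifted-Legendre-type polynomial. -/
lemma G_eq (n : ℕ) (y : R) :
    ∑ k ∈ range (n + 1), (n.choose k : R) ^ 2 * y ^ k * (y - 1) ^ (n - k)
      = ∑ m ∈ range (n + 1), (-1 : R) ^ (n - m) * (n.choose m) * ((n + m).choose m) * y ^ m := by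
  have expand : ∀ k ∈ range (n + 1),
      (n.choose k : R) ^ 2 * y ^ k * (y - 1) ^ (n - k)
        = ∑ i ∈ range (n + 1 - k),
            ((n.choose k : R) ^ 2 * ((n - k).choose i) * (-1) ^ (n - k - i)) * y ^ (k + i) := by
    intro k hk
    rw [mem_range] at hk
    rw [sub_pow, show n + 1 - k = (n - k) + 1 by omega, mul_sum]
    refine sum_congr rfl fun i hi => ?_
    rw [mem_range] at hi
    have : (-1 : R) ^ (i + (n - k)) = (-1) ^ (n - k - i) := by
      rw [show i + (n-k) = (n - k - i) + 2*i by omega, pow_add]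
      simp [pow_mul]
    rw [this, one_pow, pow_add]
    ring
  rw [sum_congr rfl expand, tri_sum]
  refine sum_congr rfl fun m hm => ?_
  rw [mem_range] at hm
  have inner : ∀ k ∈ range (m + 1),
      ((n.choose k : R) ^ 2 * ((n - k).choose (m - k)) * (-1) ^ (n - k - (m - k))) * y ^ (k + (m - k))
        = (-1 : R) ^ (n - m) * (n.choose m) * y ^ m * (n.choose k * m.choose k) := by
    intro k hk
    rw [mem_range] at hk
    have hkm : k ≤ m := by omega
    have h1 : n - k - (m - k) = n - m := by omega
    have h2 : k + (m - k) = m := by omega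
    have h3 : (n.choose k : R) * ((n - k).choose (m - k)) = (n.choose m) * (m.choose k) := by
      have := Nat.choose_mul (n := n) hkm
      have := congrArg (fun t : ℕ => (t : R)) this
      push_cast at this
      exact this.symm
    rw [h1, h2, sq]
    calc (n.choose k : R) * (n.choose k) * ((n - k).choose (m - k)) * (-1) ^ (n - m) * y ^ m
        = ((n.choose k : R) * ((n - k).choose (m - k))) * (n.choose k) * (-1) ^ (n - m) * y ^ m := by ring
      _ = _ := by rw [h3]; ring
  rw [sum_congr rfl inner, ← mul_sum]
  have : ∑ k ∈ range (m + 1), ((n.choose k : R) * (m.choose k))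
      = ((n + m).choose m : R) := by
    push_cast [← vandermonde_sum n m]
    rfl
  rw [this]
  ring

lemma G_symm (n : ℕ) (y : R) :
    ∑ k ∈ range (n + 1), (n.choose k : R) ^ 2 * (1 - y) ^ k * ((1 - y) - 1) ^ (n - k)
      = (-1 : R) ^ n * ∑ k ∈ range (n + 1), (n.choose k : R) ^ 2 * y ^ k * (y - 1) ^ (n - k) := by
  rw [← sum_range_reflect]
  simp only [Nat.add_sub_cancel]
  rw [mul_sum]
  refine sum_congr rfl fun k hk => ?_
  rw [mem_range] at hk
  have hkn : k ≤ n := by omega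
  rw [Nat.choose_symm hkn, show n - (n - k) = k by omega]
  have h1 : ((1 : R) - y) - 1 = -y := by ring
  have h2 : ((1 : R) - y) = -(y - 1) := by ring
  rw [h1, h2, neg_pow y, neg_pow (y-1)]
  have h3 : (-1 : R) ^ (n - k) * (-1 : R) ^ k = (-1) ^ n := by
    rw [← pow_add, show n - k + k = n by omega]
  rw [← h3]
  ring

/-- The key reflection identity. -/
lemma F_symm (n : ℕ) (y : R) :
    ∑ k ∈ range (n + 1), (-1 : R) ^ k * (n.choose k) * ((n + k).choose k) * y ^ k
      = (-1 : R) ^ n *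
        ∑ k ∈ range (n + 1), (-1 : R) ^ k * (n.choose k) * ((n + k).choose k) * (1 - y) ^ k := by
  have key : ∀ z : R,
      ∑ k ∈ range (n + 1), (-1 : R) ^ k * (n.choose k) * ((n + k).choose k) * z ^ k
        = (-1 : R) ^ n * ∑ k ∈ range (n + 1), (n.choose k : R) ^ 2 * z ^ k * (z - 1) ^ (n - k) := by
    intro z
    rw [G_eq, mul_sum]
    refine sum_congr rfl fun m hm => ?_
    rw [mem_range] at hm
    have h : (-1 : R) ^ n * (-1) ^ (n - m) = (-1) ^ m := by
      rw [← pow_add, show n + (n - m) = m + 2*(n-m) by omega, pow_add]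
      simp [pow_mul]
    rw [← h]
    ring
  have hinv : (-1 : R) ^ n * (-1 : R) ^ n = 1 := by
    rw [← pow_add, ← two_mul, pow_mul]
    norm_num
  rw [key y, key (1 - y), G_symm, ← mul_assoc ((-1:R)^n) ((-1:R)^n), hinv, one_mul]


lemma two_mul_factorial (k : ℕ) :
    (2 * k)! = 2 ^ k * k ! * ∏ j ∈ range k, (2 * j + 1) := by
  induction k with
  | zero => simp
  | succ k ih =>
    have h : 2 * (k + 1) = (2 * k + 1) + 1 := by ring
    rw [h, Nat.factorial_succ, Nat.factorial_succ, ih, prod_range_succ, Nat.factorial_succ]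
    ring

lemma centralBinom_mul_factorial (k : ℕ) :
    (2 * k).choose k * k ! = 2 ^ k * ∏ j ∈ range k, (2 * j + 1) := by
  have h := Nat.choose_mul_factorial_mul_factorial (show k ≤ 2 * k by omega)
  rw [show 2 * k - k = k by omega] at h
  have h2 : ((2 * k).choose k * k !) * k ! = (2 ^ k * ∏ j ∈ range k, (2 * j + 1)) * k ! := by
    rw [h, two_mul_factorial]; ring
  exact Nat.eq_of_mul_eq_mul_right k.factorial_pos h2

lemma dvd_centralBinom {p k : ℕ} (hp : p.Prime) (hk : k < p) (hpk : p ≤ 2 * k) :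
    p ∣ (2 * k).choose k := by
  have h := Nat.choose_mul_factorial_mul_factorial (show k ≤ 2 * k by omega)
  rw [show 2 * k - k = k by omega] at h
  have hd : p ∣ (2 * k).choose k * k ! * k ! := h ▸ (Nat.Prime.dvd_factorial hp).mpr hpk
  have hnf : ¬ p ∣ k ! := fun hc => absurd ((Nat.Prime.dvd_factorial hp).mp hc) (by omega)
  rcases (hp.dvd_mul.mp hd) with h' | h'
  · rcases (hp.dvd_mul.mp h') with h'' | h''
    · exact h''
    · exact absurd h'' hnf
  · exact absurd h' hnf

lemma choose_desc_int {n k : ℕ} (hk : k ≤ n) :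
    (n.choose k : ℤ) * k ! = ∏ j ∈ range k, ((n : ℤ) - j) := by
  have h := Nat.descFactorial_eq_factorial_mul_choose n k
  have h2 := Nat.descFactorial_eq_prod_range n k
  have : ((n.descFactorial k : ℕ) : ℤ) = ∏ j ∈ range k, ((n : ℤ) - j) := by
    rw [h2]
    push_cast
    refine prod_congr rfl fun j hj => ?_
    rw [mem_range] at hj
    rw [Nat.cast_sub (by omega)]
  rw [← this, h]
  push_cast
  ring

lemma choose_asc_int (n k : ℕ) :
    ((n + k).choose k : ℤ) * k ! = ∏ j ∈ range k, ((n : ℤ) + 1 + j) := by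
  have h := Nat.descFactorial_eq_factorial_mul_choose (n + k) k
  have h2 := Nat.descFactorial_eq_prod_range (n + k) k
  have key : ((n + k).descFactorial k : ℤ) = ∏ j ∈ range k, ((n : ℤ) + 1 + j) := by
    rw [h2]
    push_cast
    rw [← prod_range_reflect]
    refine prod_congr rfl fun j hj => ?_
    rw [mem_range] at hj
    rw [Nat.cast_sub (by omega)]
    push_cast [Nat.cast_sub (by omega : j ≤ k - 1)]
    omega
  rw [← key, h]
  push_cast
  ring

lemma key_congr {p n k : ℕ} (hp : p.Prime) (hodd : p ≠ 2) (hn : 2 * n + 1 = p) (hk : k ≤ n) :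
    (p : ℤ) ^ 2 ∣ (((2 * k).choose k : ℤ)) ^ 2 - (-16) ^ k * (n.choose k) * ((n + k).choose k) := by
  set D : ℤ := (((2 * k).choose k : ℤ)) ^ 2 - (-16) ^ k * (n.choose k) * ((n + k).choose k) with hD
  have hkp : k < p := by omega
  -- main algebraic identity
  have hcb : ((2 * k).choose k : ℤ) * k ! = 2 ^ k * ∏ j ∈ range k, (2 * (j : ℤ) + 1) := by
    have h0 := congrArg (fun t : ℕ => (t : ℤ)) (centralBinom_mul_factorial k)
    push_cast at h0
    exact h0
  have hprod : D * ((k ! : ℤ) ^ 2 * 4 ^ k)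
      = 16 ^ k * ((∏ j ∈ range k, (2 * (j:ℤ) + 1) ^ 2)
          - ∏ j ∈ range k, ((2 * (j:ℤ) + 1) ^ 2 - (p:ℤ) ^ 2)) := by
    have e1 : D * ((k ! : ℤ) ^ 2 * 4 ^ k)
        = (((2 * k).choose k : ℤ) * k !) ^ 2 * 4 ^ k
          - (-16) ^ k * (((n.choose k : ℤ)) * k !) * (((n + k).choose k : ℤ) * k !) * 4 ^ k := by
      rw [hD]; ring
    rw [e1, hcb, choose_desc_int hk, choose_asc_int n k]
    have e2 : (∏ j ∈ range k, ((n : ℤ) - j)) * (∏ j ∈ range k, ((n : ℤ) + 1 + j)) * 4 ^ k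
        = ∏ j ∈ range k, (4 * ((n : ℤ) - j) * ((n : ℤ) + 1 + j)) := by
      rw [← prod_mul_distrib]
      rw [show (4 : ℤ) ^ k = ∏ _j ∈ range k, (4:ℤ) by rw [prod_const, card_range]]
      rw [← prod_mul_distrib]
      exact prod_congr rfl fun j _ => by ring
    have e3 : ∏ j ∈ range k, (4 * ((n : ℤ) - j) * ((n : ℤ) + 1 + j))
        = ∏ j ∈ range k, ((p:ℤ) ^ 2 - (2 * (j:ℤ) + 1) ^ 2) := by
      refine prod_congr rfl fun j _ => ?_
      have h2n : (2 * (n:ℤ)) = (p:ℤ) - 1 := by omega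
      linear_combination (2 * (n:ℤ) + 1 + (p:ℤ)) * h2n
    have e4 : (-16 : ℤ) ^ k * ∏ j ∈ range k, ((p:ℤ) ^ 2 - (2 * (j:ℤ) + 1) ^ 2)
        = 16 ^ k * ∏ j ∈ range k, ((2 * (j:ℤ) + 1) ^ 2 - (p:ℤ) ^ 2) := by
      have e5 : ∏ j ∈ range k, ((2 * (j:ℤ) + 1) ^ 2 - (p:ℤ) ^ 2)
          = ∏ j ∈ range k, ((-1) * ((p:ℤ) ^ 2 - (2 * (j:ℤ) + 1) ^ 2)) :=
        prod_congr rfl fun j _ => by ring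
      rw [e5, prod_mul_distrib, prod_const, card_range,
        show (-16 : ℤ) ^ k = 16 ^ k * (-1) ^ k by rw [← mul_pow]; norm_num]
      ring
    have e6 : (2 ^ k * ∏ j ∈ range k, (2 * (j:ℤ) + 1)) ^ 2 * 4 ^ k
        = 16 ^ k * ∏ j ∈ range k, (2 * (j:ℤ) + 1) ^ 2 := by
      rw [mul_pow, ← prod_pow]
      have h16 : ((2:ℤ) ^ k) ^ 2 * 4 ^ k = 16 ^ k := by
        rw [← pow_mul, pow_mul', ← mul_pow]; norm_num
      linear_combination (∏ j ∈ range k, (2 * (j:ℤ) + 1) ^ 2) * h16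
    linear_combination e6 - (-16:ℤ)^k * e2 - (-16:ℤ)^k * e3 - e4
  -- p^2 divides the RHS bracket
  have hdvd_br : (p : ℤ) ^ 2 ∣ ((∏ j ∈ range k, (2 * (j:ℤ) + 1) ^ 2)
      - ∏ j ∈ range k, ((2 * (j:ℤ) + 1) ^ 2 - (p:ℤ) ^ 2)) := by
    have : ((((∏ j ∈ range k, (2 * (j:ℤ) + 1) ^ 2)
        - ∏ j ∈ range k, ((2 * (j:ℤ) + 1) ^ 2 - (p:ℤ) ^ 2)) : ℤ) : ZMod (p ^ 2)) = 0 := by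
      have hp2 : ((p : ZMod (p ^ 2)) : ZMod (p ^ 2)) ^ 2 = 0 := by
        have := ZMod.natCast_self (p ^ 2)
        push_cast at this
        exact this
      rw [Int.cast_sub, Int.cast_prod, Int.cast_prod]
      have hfac : ∀ j ∈ range k,
          ((((2*(j:ℤ)+1)^2 - (p:ℤ)^2 : ℤ)) : ZMod (p^2))
            = ((((2*(j:ℤ)+1)^2 : ℤ)) : ZMod (p^2)) := by
        intro j _
        push_cast
        rw [hp2]
        ring
      rw [prod_congr rfl hfac, sub_self]
    have h := (ZMod.intCast_zmod_eq_zero_iff_dvd _ (p ^ 2)).mp this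
    exact_mod_cast h
  have hdvdQ : (p : ℤ) ^ 2 ∣ D * ((k ! : ℤ) ^ 2 * 4 ^ k) := by
    rw [hprod]
    exact Dvd.dvd.mul_left hdvd_br _
  have hcop : IsCoprime ((p : ℤ) ^ 2) ((k ! : ℤ) ^ 2 * 4 ^ k) := by
    have hnf : ¬ p ∣ k ! := fun hc => absurd ((Nat.Prime.dvd_factorial hp).mp hc) (by omega)
    have hn4 : ¬ p ∣ 4 := by
      intro hc
      have h2 : p ∣ 2 := hp.dvd_of_dvd_pow (n := 2) (by simpa using hc)
      exact hodd ((Nat.prime_dvd_prime_iff_eq hp Nat.prime_two).mp h2)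
    have hc1 : Nat.Coprime p (k ! ^ 2 * 4 ^ k) :=
      Nat.Coprime.mul_right ((hp.coprime_iff_not_dvd.mpr hnf).pow_right 2)
        ((hp.coprime_iff_not_dvd.mpr hn4).pow_right k)
    have hc2 : IsCoprime ((p : ℤ)) (((k ! ^ 2 * 4 ^ k : ℕ)) : ℤ) :=
      Nat.isCoprime_iff_coprime.mpr hc1
    have hc3 : IsCoprime ((p:ℤ)^2) (((k ! ^ 2 * 4 ^ k : ℕ)) : ℤ) := hc2.pow_left
    have : (((k ! ^ 2 * 4 ^ k : ℕ)) : ℤ) = (k ! : ℤ) ^ 2 * 4 ^ k := by push_cast; ring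
    rwa [this] at hc3
  exact hcop.dvd_of_dvd_mul_right hdvdQ




lemma main_dvd {p n : ℕ} (hp : p.Prime) (hodd : p ≠ 2) (hn : 2 * n + 1 = p) (X : R) :
    (p : R) ^ 2 ∣ ∑ k ∈ range p,
      ((2 * k).choose k : R) ^ 2 * 16 ^ (p - 1 - k) * (X ^ k - (-1 : R) ^ n * (1 - X) ^ k) := by
  set d : ℕ → R := fun k => X ^ k - (-1 : R) ^ n * (1 - X) ^ k with hd
  have hsplit : ∑ k ∈ range p, ((2 * k).choose k : R) ^ 2 * 16 ^ (p - 1 - k) * d k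
      = (∑ k ∈ range (n+1), ((2 * k).choose k : R) ^ 2 * 16 ^ (p - 1 - k) * d k)
        + ∑ k ∈ Ico (n+1) p, ((2 * k).choose k : R) ^ 2 * 16 ^ (p - 1 - k) * d k := by
    rw [range_eq_Ico, range_eq_Ico]
    exact (Finset.sum_Ico_consecutive (fun k => ((2 * k).choose k : R) ^ 2 * 16 ^ (p - 1 - k) * d k) (Nat.zero_le _) (show n + 1 ≤ p by omega)).symm
  rw [hsplit]
  apply dvd_add
  · -- low part
    have hrw : ∀ k ∈ range (n+1),
        ((2 * k).choose k : R) ^ 2 * 16 ^ (p - 1 - k) * d k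
          = (16 : R) ^ (p - 1 - k)
              * ((((2 * k).choose k : ℤ) ^ 2 - (-16) ^ k * (n.choose k) * ((n + k).choose k) : ℤ) : R)
              * d k
            + (16 : R) ^ (p - 1 - k) * (((-16 : ℤ) ^ k * (n.choose k) * ((n + k).choose k) : ℤ) : R) * d k := by
      intro k hk
      push_cast
      ring
    rw [sum_congr rfl hrw, sum_add_distrib]
    apply dvd_add
    · apply dvd_sum
      intro k hk
      rw [mem_range] at hk
      have h := key_congr hp hodd hn (show k ≤ n by omega)
      obtain ⟨c, hc⟩ := h
      have : ((((2 * k).choose k : ℤ) ^ 2 - (-16) ^ k * (n.choose k) * ((n + k).choose k) : ℤ) : R)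
          = (p : R) ^ 2 * (c : R) := by
        rw [hc]; push_cast; ring
      rw [this]
      exact ⟨16 ^ (p - 1 - k) * (c : R) * d k, by ring⟩
    · -- this sum is zero
      have hterm : ∀ k ∈ range (n+1),
          (16 : R) ^ (p - 1 - k) * (((-16 : ℤ) ^ k * (n.choose k) * ((n + k).choose k) : ℤ) : R) * d k
            = (16 : R) ^ (p - 1) * ((-1 : R) ^ k * (n.choose k) * ((n + k).choose k) * X ^ k)
              - ((16 : R) ^ (p - 1) * (-1 : R) ^ n)
                  * ((-1 : R) ^ k * (n.choose k) * ((n + k).choose k) * (1 - X) ^ k) := by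
        intro k hk
        rw [mem_range] at hk
        have h16 : (16 : R) ^ (p - 1 - k) * 16 ^ k = 16 ^ (p - 1) := by
          rw [← pow_add]
          congr 1
          omega
        push_cast
        rw [hd]
        simp only []
        rw [show ((-16 : R)) ^ k = (-1) ^ k * 16 ^ k by rw [← mul_pow]; norm_num]
        linear_combination ((-1 : R) ^ k * (n.choose k : R) * ((n + k).choose k : R)
          * (X ^ k - (-1 : R) ^ n * (1 - X) ^ k)) * h16
      rw [sum_congr rfl hterm, sum_sub_distrib, ← mul_sum, ← mul_sum, F_symm n X]
      rw [show ((16:R)^(p-1) * ((-1:R)^n * ∑ k ∈ range (n + 1),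
            (-1 : R) ^ k * (n.choose k) * ((n + k).choose k) * (1 - X) ^ k))
          = ((16:R)^(p-1) * (-1:R)^n) * ∑ k ∈ range (n + 1),
            (-1 : R) ^ k * (n.choose k) * ((n + k).choose k) * (1 - X) ^ k by ring]
      rw [sub_self]
      exact dvd_zero _
  · apply dvd_sum
    intro k hk
    rw [mem_Ico] at hk
    obtain ⟨c, hc⟩ := dvd_centralBinom hp hk.2 (show p ≤ 2 * k by omega)
    have : ((2 * k).choose k : R) = (p : R) * (c : R) := by exact_mod_cast congrArg _ hc
    rw [this]
    exact ⟨(c : R) ^ 2 * 16 ^ (p - 1 - k) * d k, by ring⟩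

lemma not_dvd_den_of_norm_le_one {p : ℕ} [hpf : Fact p.Prime] {c : ℚ}
    (h : ‖(c : ℚ_[p])‖ ≤ 1) : ¬ (p ∣ c.den) := by
  intro hdvd
  have hp := hpf.out
  have hden0 : (c.den : ℚ_[p]) ≠ 0 := by
    exact_mod_cast (Nat.cast_ne_zero (R := ℚ_[p])).mpr c.den_nz
  have hnum : ¬ ((p : ℤ) ∣ c.num) := by
    intro hnd
    have h1 : p ∣ c.num.natAbs := by
      rwa [Int.natCast_dvd_natCast.symm, Int.dvd_natAbs]
    have h2 := Nat.Coprime.eq_one_of_dvd (c.reduced.coprime_dvd_left h1) hdvd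
    exact absurd h2 hp.one_lt.ne'
  have h1 : ‖((c.num : ℤ) : ℚ_[p])‖ = 1 :=
    le_antisymm (Padic.norm_int_le_one _)
      (not_lt.mp fun hlt => hnum ((Padic.norm_intCast_lt_one_iff).mp hlt))
  have h2 : ‖((c.den : ℤ) : ℚ_[p])‖ < 1 := by
    refine (Padic.norm_intCast_lt_one_iff).mpr ?_
    exact_mod_cast hdvd
  have h3 : (c : ℚ_[p]) = ((c.num : ℤ) : ℚ_[p]) / ((c.den : ℤ) : ℚ_[p]) := by
    push_cast
    exact Rat.cast_def c
  have h4 : ‖(c : ℚ_[p])‖ = 1 / ‖((c.den : ℤ) : ℚ_[p])‖ := by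
    rw [h3, norm_div, h1]
  have h5 : (0 : ℝ) < ‖((c.den : ℤ) : ℚ_[p])‖ := by
    refine norm_pos_iff.mpr ?_
    exact_mod_cast hden0
  rw [h4] at h
  have : (1 : ℝ) ≤ ‖((c.den : ℤ) : ℚ_[p])‖ := by
    rw [div_le_one h5] at h
    exact h
  linarith

end Aux

theorem stmt5 (p : ℕ) (hp : p.Prime) (hodd : p ≠ 2) (x : ℚ) (hx : ¬ (p ∣ x.den)) :
    ratCongr p 2
      (∑ k ∈ Finset.range p,
        ((2 * k).choose k : ℚ) ^ 2 / 16 ^ k *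
          (x ^ k - (-1 : ℚ) ^ ((p - 1) / 2) * (1 - x) ^ k)) 0 := by
  haveI : Fact p.Prime := ⟨hp⟩
  set n := (p - 1) / 2 with hn0
  have hn : 2 * n + 1 = p := by
    obtain ⟨m, hm⟩ := hp.odd_of_ne_two hodd
    omega
  set S : ℚ := ∑ k ∈ Finset.range p,
      ((2 * k).choose k : ℚ) ^ 2 / 16 ^ k * (x ^ k - (-1 : ℚ) ^ n * (1 - x) ^ k) with hS
  -- the denominator-cleared version
  set S' : ℚ := ∑ k ∈ Finset.range p,
      ((2 * k).choose k : ℚ) ^ 2 * 16 ^ (p - 1 - k) * (x ^ k - (-1 : ℚ) ^ n * (1 - x) ^ k) with hS'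
  have hS16 : S * 16 ^ (p - 1) = S' := by
    rw [hS, hS', sum_mul]
    refine sum_congr rfl fun k hk => ?_
    rw [mem_range] at hk
    have h16 : (16 : ℚ) ^ (p - 1) = 16 ^ k * 16 ^ (p - 1 - k) := by
      rw [← pow_add]
      congr 1
      omega
    have h16k : (16 : ℚ) ^ k ≠ 0 := by positivity
    field_simp [h16]
    rw [h16]
    ring
  -- move to ℚ_[p]
  have hxnorm : ‖(x : ℚ_[p])‖ ≤ 1 := Padic.norm_rat_le_one hx
  set X : ℤ_[p] := ⟨(x : ℚ_[p]), hxnorm⟩ with hX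
  obtain ⟨c, hc⟩ := main_dvd (R := ℤ_[p]) hp hodd hn X
  have hmap : ((∑ k ∈ Finset.range p,
        ((2 * k).choose k : ℤ_[p]) ^ 2 * 16 ^ (p - 1 - k)
          * (X ^ k - (-1 : ℤ_[p]) ^ n * (1 - X) ^ k) : ℤ_[p]) : ℚ_[p])
      = ∑ k ∈ Finset.range p,
        ((((2 * k).choose k : ℤ_[p]) ^ 2 * 16 ^ (p - 1 - k)
          * (X ^ k - (-1 : ℤ_[p]) ^ n * (1 - X) ^ k) : ℤ_[p]) : ℚ_[p]) :=
    map_sum PadicInt.Coe.ringHom _ _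
  have hcast : ((S' : ℚ) : ℚ_[p])
      = ((∑ k ∈ Finset.range p,
          ((2 * k).choose k : ℤ_[p]) ^ 2 * 16 ^ (p - 1 - k)
            * (X ^ k - (-1 : ℤ_[p]) ^ n * (1 - X) ^ k) : ℤ_[p]) : ℚ_[p]) := by
    rw [hS', hmap]
    push_cast
    rfl
  have hnormT : ‖((S' : ℚ) : ℚ_[p])‖ ≤ ((p : ℝ))⁻¹ ^ 2 := by
    rw [hcast, hc]
    push_cast
    rw [norm_mul, norm_pow]
    have h1 : ‖((p : ℤ_[p]) : ℚ_[p])‖ = ((p : ℝ))⁻¹ := by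
      rw [PadicInt.padic_norm_e_of_padicInt, PadicInt.norm_p]
    have h2 : ‖((c : ℤ_[p]) : ℚ_[p])‖ ≤ 1 := by
      rw [PadicInt.padic_norm_e_of_padicInt]
      exact PadicInt.norm_le_one c
    calc ‖((p : ℤ_[p]) : ℚ_[p])‖ ^ 2 * ‖((c : ℤ_[p]) : ℚ_[p])‖
        ≤ ‖((p : ℤ_[p]) : ℚ_[p])‖ ^ 2 * 1 := by
          refine mul_le_mul_of_nonneg_left h2 (by positivity)
      _ = ((p : ℝ))⁻¹ ^ 2 := by rw [h1, mul_one]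
  have h16norm : ‖((16 : ℚ_[p]))‖ = 1 := by
    have hle : ‖((16 : ℤ) : ℚ_[p])‖ ≤ 1 := Padic.norm_int_le_one _
    have hnlt : ¬ ‖((16 : ℤ) : ℚ_[p])‖ < 1 := by
      rw [Padic.norm_intCast_lt_one_iff]
      intro hdvd
      have h16' : p ∣ 16 := by exact_mod_cast hdvd
      have h2 : p ∣ 2 := hp.dvd_of_dvd_pow (n := 4) (by norm_num at h16' ⊢; exact h16')
      exact hodd ((Nat.prime_dvd_prime_iff_eq hp Nat.prime_two).mp h2)
    have : ‖((16 : ℤ) : ℚ_[p])‖ = 1 := le_antisymm hle (not_lt.mp hnlt)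
    exact_mod_cast this
  have hSnorm : ‖((S : ℚ) : ℚ_[p])‖ ≤ ((p : ℝ))⁻¹ ^ 2 := by
    have h := hS16
    have hcast2 : ((S : ℚ) : ℚ_[p]) * (16 : ℚ_[p]) ^ (p - 1) = ((S' : ℚ) : ℚ_[p]) := by
      exact_mod_cast congrArg (fun q : ℚ => (q : ℚ_[p])) h
    have : ‖((S : ℚ) : ℚ_[p])‖ * 1 ≤ ((p : ℝ))⁻¹ ^ 2 := by
      rw [show (1:ℝ) = ‖(16 : ℚ_[p]) ^ (p-1)‖ by rw [norm_pow, h16norm, one_pow]]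
      rw [← norm_mul, hcast2]
      exact hnormT
    simpa using this
  -- conclude
  rcases eq_or_ne S 0 with hS0 | hS0
  · exact ⟨0, by rw [hS0]; ring, by norm_num [hp.one_lt.ne']⟩
  · refine ⟨S / (p : ℚ) ^ 2, ?_, ?_⟩
    · have hpne : ((p : ℚ)) ≠ 0 := by exact_mod_cast hp.pos.ne'
      field_simp
      ring
    · refine not_dvd_den_of_norm_le_one (p := p) ?_
      have hpq : ((p : ℚ) : ℚ_[p]) ≠ 0 := by
        exact_mod_cast (Nat.cast_ne_zero (R := ℚ_[p])).mpr hp.pos.ne'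
      push_cast
      rw [norm_div, norm_pow]
      have hppos : (0:ℝ) < ‖((p : ℚ_[p]))‖ ^ 2 := by
        rw [Padic.norm_p]
        have : (0:ℝ) < (p:ℝ) := by exact_mod_cast hp.pos
        positivity
      rw [div_le_one hppos]
      calc ‖((S : ℚ) : ℚ_[p])‖ ≤ ((p : ℝ))⁻¹ ^ 2 := hSnorm
        _ = ‖((p : ℚ_[p]))‖ ^ 2 := by rw [Padic.norm_p]
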